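/- Let d ≥ 2, let {𝒫^(b)}_{b=1}^{d+1} be a set of d+1 mutually unbiased measurements on ℂ^d with efficiency parameter κ, and let ρ be a density operator on ℂ^d. Then (1/(d+1)) Σ_{b=1}^{d+1} R_∞(𝒫^(b)|ρ) ≥ −ln g_d(C(κ,ρ)/(d+1)), where g_d(x) = (1 + √(d−1)·√(dx−1))/d and C(κ,ρ) = Σ_{b=1}^{d+1} Σ_{n=1}^{d} (p_n^(b))². -/
import Mathlib

open Matrix Finset Real
open scoped ComplexOrder

-- concavity of x ↦ (1 + √(d-1)·√(d x - 1))/d on [1/d, ∞)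
lemma gconc (d : ℝ) (hd : 1 ≤ d) :
    ConcaveOn ℝ (Set.Ici (1/d)) (fun x => (1 + Real.sqrt (d-1) * Real.sqrt (d*x - 1)) / d) := by
  have hd0 : 0 < d := by linarith
  refine ⟨convex_Ici _, ?_⟩
  intro x hx y hy a b ha hb hab
  have hux : (0:ℝ) ≤ d*x - 1 := by
    have : 1/d ≤ x := hx
    have := (div_le_iff₀ hd0).mp this
    linarith
  have huy : (0:ℝ) ≤ d*y - 1 := by
    have : 1/d ≤ y := hy
    have := (div_le_iff₀ hd0).mp this
    linarith
  have hs := (Real.strictConcaveOn_sqrt.concaveOn).2 hux huy ha hb hab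
  simp only [smul_eq_mul] at hs ⊢
  have key : a*(d*x-1) + b*(d*y-1) = d*(a*x+b*y) - 1 := by linear_combination -hab
  rw [key] at hs
  have hc : 0 ≤ Real.sqrt (d-1) := Real.sqrt_nonneg _
  have h2 : Real.sqrt (d-1) * (a * Real.sqrt (d*x-1) + b * Real.sqrt (d*y-1))
      ≤ Real.sqrt (d-1) * Real.sqrt (d*(a*x+b*y) - 1) := by
    exact mul_le_mul_of_nonneg_left hs hc
  rw [le_div_iff₀ hd0]
  have hdne : d ≠ 0 := hd0.ne'
  field_simp
  nlinarith [h2]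

lemma maxle (d : ℕ) (hd : 2 ≤ d) (q : Fin d → ℝ) (hq : ∑ n, q n = 1) :
    1/(d:ℝ) ≤ ∑ n, q n ^ 2 ∧ 1/(d:ℝ) ≤ (⨆ n, q n) ∧
      (⨆ n, q n) ≤ (1 + Real.sqrt ((d:ℝ)-1) * Real.sqrt ((d:ℝ) * (∑ n, q n ^ 2) - 1)) / d := by
  have hdpos : (0:ℝ) < d := by positivity
  haveI : Nonempty (Fin d) := ⟨⟨0, by omega⟩⟩
  obtain ⟨n₀, hn₀⟩ := Finite.exists_max q
  have hm : (⨆ n, q n) = q n₀ :=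
    le_antisymm (ciSup_le hn₀) (le_ciSup (Finite.bddAbove_range q) n₀)
  set m := q n₀ with hmdef
  set s := ∑ n, q n ^ 2 with hsdef
  have hcs : (∑ n, q n) ^ 2 ≤ (Finset.univ.card : ℝ) * ∑ n, q n ^ 2 :=
    sq_sum_le_card_mul_sum_sq
  rw [hq, Finset.card_univ, Fintype.card_fin] at hcs
  have hs1 : 1/(d:ℝ) ≤ s := by
    rw [div_le_iff₀ hdpos]
    nlinarith
  have hm1 : 1/(d:ℝ) ≤ m := by
    have : (∑ n, q n) ≤ ∑ _n : Fin d, m := Finset.sum_le_sum (fun i _ => hn₀ i)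
    simp only [Finset.sum_const, Finset.card_univ, Fintype.card_fin, nsmul_eq_mul] at this
    rw [hq] at this
    rw [div_le_iff₀ hdpos]
    nlinarith
  refine ⟨hs1, by rw [hm]; exact hm1, ?_⟩
  rw [hm]
  -- Cauchy-Schwarz on the rest
  have hrest : (∑ n ∈ Finset.univ.erase n₀, q n) = 1 - m := by
    have := Finset.sum_erase_add Finset.univ q (Finset.mem_univ n₀)
    rw [hq] at this
    linarith [this]
  have hrest2 : (∑ n ∈ Finset.univ.erase n₀, q n ^ 2) = s - m^2 := by
    have h2' : (∑ n ∈ Finset.univ.erase n₀, q n ^ 2) + q n₀ ^ 2 = s :=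
      Finset.sum_erase_add Finset.univ (fun n => q n ^ 2) (Finset.mem_univ n₀)
    linarith
  have hcs2 : (∑ n ∈ Finset.univ.erase n₀, q n) ^ 2
      ≤ ((Finset.univ.erase n₀).card : ℝ) * ∑ n ∈ Finset.univ.erase n₀, q n ^ 2 :=
    sq_sum_le_card_mul_sum_sq
  rw [hrest, hrest2, Finset.card_erase_of_mem (Finset.mem_univ n₀), Finset.card_univ,
    Fintype.card_fin] at hcs2
  have hdc : ((d - 1 : ℕ) : ℝ) = (d:ℝ) - 1 := by
    have : (1:ℕ) ≤ d := by omega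
    push_cast [this]; ring
  rw [hdc] at hcs2
  have hkey : ((d:ℝ)*m - 1)^2 ≤ ((d:ℝ)-1) * ((d:ℝ)*s - 1) := by nlinarith
  have hds : (0:ℝ) ≤ (d:ℝ)*s - 1 := by
    have := (div_le_iff₀ hdpos).mp hs1; linarith
  have hX : (d:ℝ)*m - 1 ≤ Real.sqrt ((d:ℝ)-1) * Real.sqrt ((d:ℝ)*s - 1) := by
    rcases le_or_gt ((d:ℝ)*m - 1) 0 with h | h
    · exact h.trans (by positivity)
    · have h1 : (d:ℝ)*m - 1 = Real.sqrt (((d:ℝ)*m - 1)^2) := by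
        rw [Real.sqrt_sq h.le]
      rw [h1, ← Real.sqrt_mul (by linarith : (0:ℝ) ≤ (d:ℝ)-1)]
      exact Real.sqrt_le_sqrt hkey
  rw [le_div_iff₀ hdpos]
  linarith

theorem stmt11 (d : ℕ) (hd : 2 ≤ d) (κ : ℝ)
    (hκ1 : 1 / (d : ℝ) < κ) (hκ2 : κ ≤ 1)
    (P : Fin (d + 1) → Fin d → Matrix (Fin d) (Fin d) ℂ)
    (hpsd : ∀ b n, (P b n).PosSemidef)
    (hsum : ∀ b, ∑ n, P b n = 1)
    (htr1 : ∀ b n, (P b n).trace = 1)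
    (htr2 : ∀ b b', b ≠ b' → ∀ n n', (P b n * P b' n').trace = ((1 / (d : ℝ) : ℝ) : ℂ))
    (htr3 : ∀ b n n', (P b n * P b n').trace =
      if n = n' then ((κ : ℝ) : ℂ) else (((1 - κ) / ((d : ℝ) - 1) : ℝ) : ℂ))
    (ρ : Matrix (Fin d) (Fin d) ℂ) (hρ : ρ.PosSemidef) (hρtr : ρ.trace = 1)
    (p : Fin (d + 1) → Fin d → ℝ)
    (hp : ∀ b n, ((p b n : ℝ) : ℂ) = (P b n * ρ).trace) :
    (1 / ((d : ℝ) + 1)) * (∑ b, (-Real.log (⨆ n, p b n))) ≥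
      -Real.log ((1 + Real.sqrt ((d : ℝ) - 1) * Real.sqrt ((d : ℝ) * ((∑ b, ∑ n, (p b n) ^ 2) / ((d : ℝ) + 1)) - 1)) / (d : ℝ)) := by
  have hd2 : (2:ℝ) ≤ (d:ℝ) := by exact_mod_cast hd
  have hdpos : (0:ℝ) < d := by linarith
  have hd1pos : (0:ℝ) < (d:ℝ) + 1 := by linarith
  -- each row of p sums to 1
  have hq1 : ∀ b, ∑ n, p b n = 1 := by
    intro b
    have hc : (∑ n, ((p b n : ℝ) : ℂ)) = ((1:ℝ) : ℂ) := by
      calc ∑ n, ((p b n : ℝ) : ℂ) = ∑ n, (P b n * ρ).trace :=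
            Finset.sum_congr rfl (fun n _ => hp b n)
        _ = (∑ n, P b n * ρ).trace := (Matrix.trace_sum _ _).symm
        _ = ((∑ n, P b n) * ρ).trace := by rw [Finset.sum_mul]
        _ = (1 * ρ).trace := by rw [hsum b]
        _ = ((1:ℝ) : ℂ) := by rw [one_mul, hρtr]; norm_num
    exact_mod_cast hc
  set g : ℝ → ℝ := fun x => (1 + Real.sqrt ((d:ℝ)-1) * Real.sqrt ((d:ℝ)*x - 1)) / d with hgdef
  set w : ℝ := 1 / ((d:ℝ) + 1) with hwdef
  have hwpos : 0 < w := by rw [hwdef]; positivity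
  have hfacts := fun b => maxle d hd (p b) (hq1 b)
  have hwsum : ∑ _b : Fin (d+1), w = 1 := by
    rw [Finset.sum_const, Finset.card_univ, Fintype.card_fin, nsmul_eq_mul, hwdef]
    push_cast
    field_simp
  have hw0 : ∀ b ∈ (Finset.univ : Finset (Fin (d+1))), (0:ℝ) ≤ w := fun _ _ => hwpos.le
  -- Jensen for g
  have hjg := (gconc (d:ℝ) (by linarith)).le_map_sum (w := fun _ => w)
    (p := fun b => ∑ n, p b n ^ 2) hw0 hwsum (fun b _ => (hfacts b).1)
  have hpt : (∑ b : Fin (d+1), w • (∑ n, p b n ^ 2))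
      = (∑ b, ∑ n, p b n ^ 2) / ((d:ℝ)+1) := by
    simp only [smul_eq_mul]
    rw [← Finset.mul_sum, hwdef]
    ring
  rw [hpt] at hjg
  have hgpos : ∀ x : ℝ, 0 < g x := by
    intro x
    rw [hgdef]
    have := Real.sqrt_nonneg ((d:ℝ)-1)
    have := Real.sqrt_nonneg ((d:ℝ)*x - 1)
    positivity
  -- Jensen for log
  have hjl := (strictConcaveOn_log_Ioi.concaveOn).le_map_sum (w := fun _ => w)
    (p := fun b => g (∑ n, p b n ^ 2)) hw0 hwsum (fun b _ => hgpos _)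
  have hsumpos : 0 < ∑ b : Fin (d+1), w • g (∑ n, p b n ^ 2) :=
    Finset.sum_pos (fun b _ => by
      simp only [smul_eq_mul]; exact mul_pos hwpos (hgpos _)) Finset.univ_nonempty
  have hlog2 : Real.log (∑ b : Fin (d+1), w • g (∑ n, p b n ^ 2))
      ≤ Real.log (g ((∑ b, ∑ n, p b n ^ 2) / ((d:ℝ)+1))) :=
    Real.log_le_log hsumpos hjg
  have hchain : ∑ b : Fin (d+1), w * Real.log (g (∑ n, p b n ^ 2))
      ≤ Real.log (g ((∑ b, ∑ n, p b n ^ 2) / ((d:ℝ)+1))) := by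
    have := hjl.trans hlog2
    simpa only [smul_eq_mul] using this
  -- per-b entropy bound
  have hper : ∀ b, Real.log (⨆ n, p b n) ≤ Real.log (g (∑ n, p b n ^ 2)) := by
    intro b
    have hmb : 0 < ⨆ n, p b n := lt_of_lt_of_le (by positivity) (hfacts b).2.1
    exact Real.log_le_log hmb (hfacts b).2.2
  have hsum2 : ∑ b : Fin (d+1), (-Real.log (g (∑ n, p b n ^ 2)))
      ≤ ∑ b : Fin (d+1), (-Real.log (⨆ n, p b n)) :=
    Finset.sum_le_sum (fun b _ => neg_le_neg (hper b))
  have hmul : w * (∑ b : Fin (d+1), (-Real.log (g (∑ n, p b n ^ 2))))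
      ≤ w * (∑ b : Fin (d+1), (-Real.log (⨆ n, p b n))) :=
    mul_le_mul_of_nonneg_left hsum2 hwpos.le
  have hrw : w * (∑ b : Fin (d+1), (-Real.log (g (∑ n, p b n ^ 2))))
      = -(∑ b : Fin (d+1), w * Real.log (g (∑ n, p b n ^ 2))) := by
    rw [Finset.mul_sum, ← Finset.sum_neg_distrib]
    exact Finset.sum_congr rfl (fun b _ => by ring)
  show w * (∑ b, (-Real.log (⨆ n, p b n)))
      ≥ -Real.log (g ((∑ b, ∑ n, p b n ^ 2) / ((d:ℝ)+1)))
  linarith [hmul, hrw ▸ hmul, hchain]
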